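/- Let r_n := (2/π) ∫_0^{π/2} sin(nx)² / (sin x · √(4 − cos(x)²)) dx. Then there exists a constant K > 0 such that for every integer n ≥ 1, |r_n − log(n)/(√3·π) − (γ + log(2√3))/(√3·π)| ≤ K/n, where γ is the Euler–Mascheroni constant. In particular r_n − log(n)/(√3·π) converges to (γ + log(2√3))/(√3·π) as n → ∞. -/

import Mathlib

open Real Filter intervalIntegral


/-- The two-point resistance `R(n,n)` of the infinite triangular resistor lattice. -/
noncomputable def triRes (n : ℕ) : ℝ :=
  (2 / π) * ∫ x in (0:ℝ)..(π / 2),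
    Real.sin (n * x) ^ 2 / (Real.sin x * Real.sqrt (4 - Real.cos x ^ 2))

noncomputable def aa (x : ℝ) : ℝ := Real.sqrt (4 - Real.cos x ^ 2)
noncomputable def psi (x : ℝ) : ℝ :=
  -Real.sin x / (Real.sqrt 3 * aa x * (Real.sqrt 3 + aa x))
noncomputable def GG (x : ℝ) : ℝ :=
  -(Real.sqrt 3)⁻¹ * (Real.log (aa x + Real.sqrt 3 * Real.cos x) - Real.log (2 * (1 + Real.cos x)))

lemma four_sub_cos_sq_pos (x : ℝ) : (0:ℝ) < 4 - Real.cos x ^ 2 := by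
  nlinarith [Real.cos_sq_le_one x]

lemma aa_sq (x : ℝ) : aa x ^ 2 = 4 - Real.cos x ^ 2 :=
  Real.sq_sqrt (four_sub_cos_sq_pos x).le

lemma aa_pos (x : ℝ) : 0 < aa x := Real.sqrt_pos.2 (four_sub_cos_sq_pos x)

lemma sqrt3_pos : (0:ℝ) < Real.sqrt 3 := Real.sqrt_pos.2 (by norm_num)

lemma denom_pos (x : ℝ) : 0 < Real.sqrt 3 * aa x * (Real.sqrt 3 + aa x) := by
  have := aa_pos x; have := sqrt3_pos; positivity

lemma cont_aa : Continuous aa :=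
  Real.continuous_sqrt.comp (by continuity)

lemma cont_psi : Continuous psi := by
  apply Continuous.div (by continuity) (by have := cont_aa; continuity)
  exact fun x => (denom_pos x).ne'

lemma psi_zero : psi 0 = 0 := by simp [psi]

lemma contDiff_aa : ContDiff ℝ 1 aa := by
  rw [contDiff_iff_contDiffAt]
  intro x
  exact ContDiffAt.sqrt ((contDiff_const.sub (Real.contDiff_cos.pow 2)).contDiffAt)
    (four_sub_cos_sq_pos x).ne'

lemma contDiff_psi : ContDiff ℝ 1 psi := by
  rw [contDiff_iff_contDiffAt]
  intro x
  exact ContDiffAt.div (Real.contDiff_sin.neg.contDiffAt)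
    (((contDiff_const.mul contDiff_aa).mul (contDiff_const.add contDiff_aa)).contDiffAt)
    (denom_pos x).ne'

lemma psi_eq {x : ℝ} (hs : Real.sin x ≠ 0) :
    psi x = (Real.sin x * aa x)⁻¹ - (Real.sqrt 3 * Real.sin x)⁻¹ := by
  have ha := aa_sq x
  have ha0 := (aa_pos x).ne'
  have hr : Real.sqrt 3 ^ 2 = 3 := Real.sq_sqrt (by norm_num)
  have hr0 := sqrt3_pos.ne'
  have hra : Real.sqrt 3 + aa x ≠ 0 := by
    have := aa_pos x; have := sqrt3_pos; positivity
  have hsc : Real.sin x ^ 2 = 1 - Real.cos x ^ 2 := Real.sin_sq x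
  rw [psi]
  field_simp
  linear_combination (-1 : ℝ) * hsc +
    (-1 : ℝ) * hr + ha

lemma hasDerivAt_aa (x : ℝ) :
    HasDerivAt aa (Real.cos x * Real.sin x / aa x) x := by
  have hc : HasDerivAt (fun y => 4 - Real.cos y ^ 2) (2 * Real.cos x * Real.sin x) x := by
    have h := ((Real.hasDerivAt_cos x).pow 2).const_sub 4
    refine h.congr_deriv ?_
    push_cast
    ring
  have h2 := (Real.hasDerivAt_sqrt (four_sub_cos_sq_pos x).ne').comp x hc
  refine h2.congr_deriv ?_
  rw [aa]
  field_simp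

lemma hasDerivAt_GG {x : ℝ} (hcx : 0 ≤ Real.cos x) : HasDerivAt GG (psi x) x := by
  have ha := aa_sq x
  have ha0 := aa_pos x
  have hr : Real.sqrt 3 ^ 2 = 3 := Real.sq_sqrt (by norm_num)
  have hr0 := sqrt3_pos
  have hc1 : -1 < Real.cos x := by nlinarith
  have hpos1 : 0 < aa x + Real.sqrt 3 * Real.cos x := by positivity
  have hpos2 : (0:ℝ) < 2 * (1 + Real.cos x) := by nlinarith
  have h1 : HasDerivAt (fun y => aa y + Real.sqrt 3 * Real.cos y)
      (Real.cos x * Real.sin x / aa x + Real.sqrt 3 * -Real.sin x) x :=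
    (hasDerivAt_aa x).add ((Real.hasDerivAt_cos x).const_mul (Real.sqrt 3))
  have h2 : HasDerivAt (fun y => 2 * (1 + Real.cos y)) (2 * -Real.sin x) x := by
    have := ((Real.hasDerivAt_cos x).const_add 1).const_mul 2
    simpa using this
  have hlog1 := h1.log hpos1.ne'
  have hlog2 := h2.log hpos2.ne'
  have h := (hlog1.sub hlog2).const_mul (-(Real.sqrt 3)⁻¹)
  refine h.congr_deriv ?_
  rw [psi]
  field_simp
  linear_combination ((6:ℝ)*Real.sin x*Real.sqrt 3 + (-2:ℝ)*Real.sin x*Real.sqrt 3^3 -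
    Real.sin x*aa x) * ha +
    ((-8:ℝ)*Real.sin x*Real.sqrt 3 + (2:ℝ)*Real.sin x*Real.cos x^2*Real.sqrt 3 +
    (2:ℝ)*Real.sin x*Real.sqrt 3*aa x^2 + Real.sin x*aa x) * hr

lemma sum_sin (n : ℕ) (x : ℝ) :
    Real.sin x * ∑ k ∈ Finset.range n, Real.sin ((2 * (k:ℝ) + 1) * x)
      = Real.sin ((n:ℝ) * x) ^ 2 := by
  induction n with
  | zero => simp
  | succ n ih =>
    rw [Finset.sum_range_succ, mul_add, ih]
    push_cast
    have h := Real.cos_sub_cos (2 * (n:ℝ) * x) ((2 * (n:ℝ) + 2) * x)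
    have h1 : Real.sin ((n:ℝ) * x) ^ 2 = 1 / 2 - Real.cos (2 * ((n:ℝ) * x)) / 2 :=
      Real.sin_sq_eq_half_sub ((n:ℝ) * x)
    have h2 : Real.sin (((n:ℝ) + 1) * x) ^ 2 = 1 / 2 - Real.cos (2 * (((n:ℝ)+1) * x)) / 2 :=
      Real.sin_sq_eq_half_sub _
    have e1 : 2 * ((n:ℝ) * x) = 2 * (n:ℝ) * x := by ring
    have e2 : 2 * (((n:ℝ) + 1) * x) = (2 * (n:ℝ) + 2) * x := by ring
    have e3 : (2 * (n:ℝ) * x + (2 * (n:ℝ) + 2) * x) / 2 = (2 * (n:ℝ) + 1) * x := by ring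
    have e4 : (2 * (n:ℝ) * x - (2 * (n:ℝ) + 2) * x) / 2 = -x := by ring
    rw [e3, e4, Real.sin_neg] at h
    rw [h1, h2, e1, e2]
    nlinarith [h]

lemma int_sin_mul (m : ℝ) (hm : m ≠ 0) (b : ℝ) :
    ∫ x in (0:ℝ)..b, Real.sin (m * x) = (1 - Real.cos (m * b)) / m := by
  have key : ∀ x : ℝ, HasDerivAt (fun y => -(Real.cos (m * y) / m)) (Real.sin (m * x)) x := by
    intro x
    have h1 : HasDerivAt (fun y : ℝ => m * y) m x := by
      simpa using (hasDerivAt_id x).const_mul m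
    have h2 := (Real.hasDerivAt_cos (m * x)).comp x h1
    have h3 := (h2.div_const m).neg
    refine h3.congr_deriv ?_
    field_simp
  rw [intervalIntegral.integral_eq_sub_of_hasDerivAt (fun x _ => key x)
    ((Real.continuous_sin.comp (continuous_const.mul continuous_id)).intervalIntegrable 0 b)]
  simp
  ring

lemma cos_odd_half (k : ℕ) : Real.cos ((2 * (k:ℝ) + 1) * (π / 2)) = 0 := by
  have : (2 * (k:ℝ) + 1) * (π / 2) = (k:ℝ) * π + π / 2 := by ring
  rw [this, Real.cos_add_pi_div_two, Real.sin_nat_mul_pi, neg_zero]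

lemma int_D (n : ℕ) :
    ∫ x in (0:ℝ)..(π/2), (∑ k ∈ Finset.range n, Real.sin ((2 * (k:ℝ) + 1) * x))
      = ∑ k ∈ Finset.range n, (2 * (k:ℝ) + 1)⁻¹ := by
  rw [intervalIntegral.integral_finset_sum]
  · refine Finset.sum_congr rfl fun k _ => ?_
    have hm : (2 * (k:ℝ) + 1) ≠ 0 := by positivity
    rw [int_sin_mul _ hm, cos_odd_half k]
    simp
  · intro k _
    exact (Real.continuous_sin.comp (continuous_const.mul continuous_id)).intervalIntegrable 0 _

lemma triRes_eq (n : ℕ) :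
    triRes n = 2 / π * ((Real.sqrt 3)⁻¹ * (∑ k ∈ Finset.range n, (2 * (k:ℝ) + 1)⁻¹)
      + ∫ x in (0:ℝ)..(π/2), Real.sin ((n:ℝ) * x) ^ 2 * psi x) := by
  unfold triRes
  have hEq : Set.EqOn
      (fun x => Real.sin ((n:ℝ) * x) ^ 2 / (Real.sin x * Real.sqrt (4 - Real.cos x ^ 2)))
      (fun x => (Real.sqrt 3)⁻¹ * (∑ k ∈ Finset.range n, Real.sin ((2 * (k:ℝ) + 1) * x))
        + Real.sin ((n:ℝ) * x) ^ 2 * psi x)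
      (Set.uIcc (0:ℝ) (π/2)) := by
    intro x hx
    rw [Set.uIcc_of_le (by positivity : (0:ℝ) ≤ π/2)] at hx
    rcases eq_or_lt_of_le hx.1 with h0 | h0
    · simp [← h0, psi]
    · have hxpi : x < π := lt_of_le_of_lt hx.2 (by linarith [Real.pi_pos])
      have hsin : 0 < Real.sin x := Real.sin_pos_of_pos_of_lt_pi h0 hxpi
      have haa : Real.sqrt (4 - Real.cos x ^ 2) = aa x := rfl
      simp only [haa]
      have hsum := sum_sin n x
      have hD : (∑ k ∈ Finset.range n, Real.sin ((2 * (k:ℝ) + 1) * x))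
          = Real.sin ((n:ℝ) * x) ^ 2 / Real.sin x := by
        rw [eq_div_iff hsin.ne']
        linear_combination hsum
      rw [hD, psi_eq hsin.ne']
      have := (aa_pos x).ne'
      have := sqrt3_pos.ne'
      field_simp
      ring
  have hc1 : Continuous fun x : ℝ =>
      (Real.sqrt 3)⁻¹ * (∑ k ∈ Finset.range n, Real.sin ((2 * (k:ℝ) + 1) * x)) := by
    refine Continuous.mul continuous_const ?_
    apply continuous_finset_sum
    intro k _
    exact Real.continuous_sin.comp (by continuity)
  have hc2 : Continuous fun x : ℝ => Real.sin ((n:ℝ) * x) ^ 2 * psi x := by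
    apply Continuous.mul _ cont_psi
    exact (Real.continuous_sin.comp (by continuity)).pow 2
  rw [intervalIntegral.integral_congr hEq,
    intervalIntegral.integral_add (hc1.intervalIntegrable 0 _) (hc2.intervalIntegrable 0 _),
    intervalIntegral.integral_const_mul, int_D]

lemma aa_pi_div_two : aa (π/2) = 2 := by
  rw [aa, Real.cos_pi_div_two]
  norm_num

lemma aa_zero : aa 0 = Real.sqrt 3 := by
  rw [aa, Real.cos_zero]
  norm_num

lemma int_psi : ∫ x in (0:ℝ)..(π/2), psi x
    = (Real.sqrt 3)⁻¹ * (Real.log (2 * Real.sqrt 3) - Real.log 4) := by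
  rw [intervalIntegral.integral_eq_sub_of_hasDerivAt
    (f := GG) (f' := psi)
    (fun x hx => by
      rw [Set.uIcc_of_le (by positivity : (0:ℝ) ≤ π/2)] at hx
      exact hasDerivAt_GG (Real.cos_nonneg_of_mem_Icc
        ⟨le_trans (by linarith [Real.pi_pos]) hx.1, hx.2⟩))
    (cont_psi.intervalIntegrable 0 _)]
  rw [GG, GG, aa_pi_div_two, aa_zero, Real.cos_pi_div_two, Real.cos_zero]
  norm_num
  rw [show Real.sqrt 3 + Real.sqrt 3 = 2 * Real.sqrt 3 by ring]

lemma J_split (n : ℕ) :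
    ∫ x in (0:ℝ)..(π/2), Real.sin ((n:ℝ) * x) ^ 2 * psi x
      = 1/2 * (∫ x in (0:ℝ)..(π/2), psi x)
        - 1/2 * ∫ x in (0:ℝ)..(π/2), Real.cos (2 * (n:ℝ) * x) * psi x := by
  have hptw : ∀ x : ℝ, Real.sin ((n:ℝ) * x) ^ 2 * psi x
      = 1/2 * psi x - 1/2 * (Real.cos (2 * (n:ℝ) * x) * psi x) := by
    intro x
    rw [Real.sin_sq_eq_half_sub, show 2 * ((n:ℝ) * x) = 2 * (n:ℝ) * x by ring]
    ring
  have hc3 : Continuous fun x : ℝ => Real.cos (2*(n:ℝ)*x) * psi x := by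
    exact (Real.continuous_cos.comp (by continuity)).mul cont_psi
  simp only [hptw]
  rw [intervalIntegral.integral_sub (f := fun x => 1/2 * psi x)
      (g := fun x => 1/2 * (Real.cos (2 * (n:ℝ) * x) * psi x)) ((continuous_const.mul cont_psi).intervalIntegrable 0 _)
      ((continuous_const.mul hc3).intervalIntegrable 0 _),
    intervalIntegral.integral_const_mul, intervalIntegral.integral_const_mul]

lemma cos_psi_bound : ∃ M : ℝ, 0 ≤ M ∧ ∀ n : ℕ, 1 ≤ n →
    |∫ x in (0:ℝ)..(π/2), Real.cos (2 * (n:ℝ) * x) * psi x| ≤ M / n := by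
  have hcd : Continuous (deriv psi) := contDiff_psi.continuous_deriv le_rfl
  obtain ⟨M0, hM0⟩ := (isCompact_Icc (a := (0:ℝ)) (b := π/2)).exists_bound_of_continuousOn
    hcd.continuousOn
  have hM0nn : 0 ≤ M0 :=
    le_trans (norm_nonneg _) (hM0 0 ⟨le_refl 0, by positivity⟩)
  refine ⟨M0 * π / 4, by positivity, fun n hn => ?_⟩
  have hnR : (0:ℝ) < n := by exact_mod_cast hn
  set m : ℝ := 2 * (n:ℝ) with hm
  have hmpos : 0 < m := by rw [hm]; positivity
  have hm0 : m ≠ 0 := hmpos.ne'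
  -- integration by parts
  have hv : ∀ x : ℝ, HasDerivAt (fun y => Real.sin (m * y) / m) (Real.cos (m * x)) x := by
    intro x
    have h1 : HasDerivAt (fun y : ℝ => m * y) m x := by
      simpa using (hasDerivAt_id x).const_mul m
    have h2 := ((Real.hasDerivAt_sin (m * x)).comp x h1).div_const m
    refine h2.congr_deriv ?_
    field_simp
  have hu : ∀ x ∈ Set.uIcc (0:ℝ) (π/2), HasDerivAt psi (deriv psi x) x := fun x _ =>
    ((contDiff_psi.differentiable one_ne_zero) x).hasDerivAt
  have hibp := intervalIntegral.integral_mul_deriv_eq_deriv_mul hu (fun x _ => hv x)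
    (hcd.intervalIntegrable 0 _)
    ((Real.continuous_cos.comp (continuous_const.mul continuous_id)).intervalIntegrable 0 _)
  have hsm : Real.sin (m * (π/2)) = 0 := by
    rw [show m * (π/2) = (n:ℝ) * π by rw [hm]; ring]
    exact_mod_cast Real.sin_nat_mul_pi n
  rw [hsm, psi_zero] at hibp
  have hmc : ∀ x, Real.cos (m * x) * psi x = psi x * Real.cos (m * x) := fun x => mul_comm _ _
  simp only [hmc]
  rw [hibp]
  simp only [zero_mul, mul_zero, zero_sub, zero_div, sub_zero, zero_add, neg_neg, abs_neg]
  have hb : ∀ x ∈ Set.uIoc (0:ℝ) (π/2), ‖deriv psi x * (Real.sin (m * x) / m)‖ ≤ M0 / m := by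
    intro x hx
    rw [Set.uIoc_of_le (by positivity : (0:ℝ) ≤ π/2)] at hx
    rw [norm_mul]
    have h1 : ‖deriv psi x‖ ≤ M0 := hM0 x ⟨hx.1.le, hx.2⟩
    have h2 : ‖Real.sin (m * x) / m‖ ≤ 1 / m := by
      rw [norm_div, Real.norm_eq_abs, Real.norm_eq_abs, abs_of_pos hmpos]
      exact div_le_div_of_nonneg_right (Real.abs_sin_le_one _) hmpos.le
    calc ‖deriv psi x‖ * ‖Real.sin (m * x) / m‖ ≤ M0 * (1/m) := by
          apply mul_le_mul h1 h2 (norm_nonneg _) hM0nn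
      _ = M0 / m := by ring
  have := intervalIntegral.norm_integral_le_of_norm_le_const hb
  rw [Real.norm_eq_abs] at this
  calc |∫ x in (0:ℝ)..(π/2), deriv psi x * (Real.sin (m*x)/m)|
      ≤ M0 / m * |π/2 - 0| := this
    _ = M0 * π / 4 / n := by
        rw [sub_zero, abs_of_pos Real.pi_div_two_pos, hm, div_div,
          eq_div_iff (by positivity : (4:ℝ)*(n:ℝ) ≠ 0), div_mul_eq_mul_div,
          div_mul_eq_mul_div, div_eq_iff (by positivity : (2:ℝ)*(n:ℝ) ≠ 0)]
        ring

lemma sum_odd_harmonic (n : ℕ) :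
    ∑ k ∈ Finset.range n, (2 * (k:ℝ) + 1)⁻¹
      = (harmonic (2*n) : ℝ) - (harmonic n : ℝ) / 2 := by
  induction n with
  | zero => simp
  | succ n ih =>
    rw [Finset.sum_range_succ, ih, show 2*(n+1) = (2*n+1)+1 by ring, harmonic_succ,
      harmonic_succ, harmonic_succ]
    push_cast
    have h1 : (n:ℝ) + 1 ≠ 0 := by positivity
    have h2 : 2*(n:ℝ) + 1 ≠ 0 := by positivity
    have h3 : 2*(n:ℝ) + 1 + 1 ≠ 0 := by positivity
    field_simp
    ring

lemma harmonic_gamma_bound (n : ℕ) (hn : 1 ≤ n) :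
    0 ≤ (harmonic n : ℝ) - Real.log n - Real.eulerMascheroniConstant ∧
    (harmonic n : ℝ) - Real.log n - Real.eulerMascheroniConstant ≤ 1 / n := by
  have hn0 : n ≠ 0 := Nat.one_le_iff_ne_zero.mp hn
  have hnR : (0:ℝ) < n := by exact_mod_cast hn
  have h1 : Real.eulerMascheroniConstant < Real.eulerMascheroniSeq' n :=
    Real.eulerMascheroniConstant_lt_eulerMascheroniSeq' n
  have hs' : Real.eulerMascheroniSeq' n = (harmonic n : ℝ) - Real.log n := by
    rw [Real.eulerMascheroniSeq', if_neg hn0]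
  have h2 : Real.eulerMascheroniSeq n < Real.eulerMascheroniConstant :=
    Real.eulerMascheroniSeq_lt_eulerMascheroniConstant n
  have hs : Real.eulerMascheroniSeq n = (harmonic n : ℝ) - Real.log ((n:ℝ)+1) := rfl
  have hlog : Real.log ((n:ℝ)+1) - Real.log n ≤ 1 / n := by
    rw [← Real.log_div (by positivity) hnR.ne']
    have := Real.log_le_sub_one_of_pos (show (0:ℝ) < ((n:ℝ)+1)/n by positivity)
    calc Real.log (((n:ℝ)+1)/n) ≤ ((n:ℝ)+1)/n - 1 := this
      _ = 1/n := by field_simp; ring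
  constructor
  · rw [hs'] at h1; linarith
  · rw [hs] at h2; linarith

lemma sum_odd_gamma_bound (n : ℕ) (hn : 1 ≤ n) :
    |∑ k ∈ Finset.range n, (2 * (k:ℝ) + 1)⁻¹
      - (Real.log n / 2 + Real.log 2 + Real.eulerMascheroniConstant / 2)| ≤ 1 / n := by
  have hnR : (0:ℝ) < n := by exact_mod_cast hn
  have h2n : 1 ≤ 2*n := by omega
  obtain ⟨ha1, ha2⟩ := harmonic_gamma_bound (2*n) h2n
  obtain ⟨hb1, hb2⟩ := harmonic_gamma_bound n hn
  have hcast : ((2*n : ℕ) : ℝ) = 2*(n:ℝ) := by push_cast; ring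
  have hlog2n : Real.log ((2*n : ℕ) : ℝ) = Real.log 2 + Real.log n := by
    rw [hcast, Real.log_mul (by norm_num) hnR.ne']
  rw [sum_odd_harmonic]
  rw [hlog2n] at ha1 ha2
  rw [hcast] at ha2
  have h2n' : 1/(2*(n:ℝ)) ≤ 1/n := by
    apply div_le_div_of_nonneg_left (by norm_num) hnR (by linarith)
  rw [abs_le]
  constructor <;> nlinarith [ha1, ha2, hb1, hb2]

lemma main_bound : ∀ n : ℕ, 1 ≤ n →
    ∀ M : ℝ, |∫ x in (0:ℝ)..(π/2), Real.cos (2 * (n:ℝ) * x) * psi x| ≤ M / n →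
    |triRes n - Real.log n / (Real.sqrt 3 * π)
      - (Real.eulerMascheroniConstant + Real.log (2 * Real.sqrt 3)) / (Real.sqrt 3 * π)|
      ≤ (2 / (Real.sqrt 3 * π) + M / π) / n := by
  intro n hn M hMb
  have hnR : (0:ℝ) < n := by exact_mod_cast hn
  have hπ := Real.pi_pos
  have hr := sqrt3_pos
  have hlog4 : Real.log 4 = 2 * Real.log 2 := by
    rw [show (4:ℝ) = 2^2 by norm_num, Real.log_pow]
    push_cast; ring
  set Sn := ∑ k ∈ Finset.range n, (2 * (k:ℝ) + 1)⁻¹ with hSn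
  set Cn := ∫ x in (0:ℝ)..(π/2), Real.cos (2 * (n:ℝ) * x) * psi x with hCn
  have key : triRes n - Real.log n / (Real.sqrt 3 * π)
      - (Real.eulerMascheroniConstant + Real.log (2 * Real.sqrt 3)) / (Real.sqrt 3 * π)
      = 2 / (Real.sqrt 3 * π) * (Sn - (Real.log n / 2 + Real.log 2
          + Real.eulerMascheroniConstant / 2)) - (1/π) * Cn := by
    rw [triRes_eq n, J_split n, int_psi, ← hSn, ← hCn]
    field_simp
    linear_combination (-1 : ℝ) * hlog4
  rw [key]
  have he := sum_odd_gamma_bound n hn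
  calc |2 / (Real.sqrt 3 * π) * (Sn - (Real.log n / 2 + Real.log 2
          + Real.eulerMascheroniConstant / 2)) - (1/π) * Cn|
      ≤ |2 / (Real.sqrt 3 * π) * (Sn - (Real.log n / 2 + Real.log 2
          + Real.eulerMascheroniConstant / 2))| + |(1/π) * Cn| := abs_sub _ _
    _ ≤ 2 / (Real.sqrt 3 * π) * (1/n) + (1/π) * (M/n) := by
        rw [abs_mul, abs_mul]
        apply add_le_add
        · rw [abs_of_pos (by positivity : (0:ℝ) < 2 / (Real.sqrt 3 * π))]
          exact mul_le_mul_of_nonneg_left he (by positivity)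
        · rw [abs_of_pos (by positivity : (0:ℝ) < 1/π)]
          exact mul_le_mul_of_nonneg_left hMb (by positivity)
    _ = (2 / (Real.sqrt 3 * π) + M / π) / n := by field_simp

theorem triRes_asymptotics :
    (∃ K : ℝ, 0 < K ∧ ∀ n : ℕ, 1 ≤ n →
      |triRes n - Real.log n / (Real.sqrt 3 * π)
        - (Real.eulerMascheroniConstant + Real.log (2 * Real.sqrt 3)) / (Real.sqrt 3 * π)|
        ≤ K / n) ∧
    Tendsto (fun n : ℕ => triRes n - Real.log n / (Real.sqrt 3 * π)) atTop
      (nhds ((Real.eulerMascheroniConstant + Real.log (2 * Real.sqrt 3)) / (Real.sqrt 3 * π))) := by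
  obtain ⟨M, hM0, hMb⟩ := cos_psi_bound
  have hπ := Real.pi_pos
  have hr := sqrt3_pos
  have hK : (0:ℝ) < 2 / (Real.sqrt 3 * π) + M / π := by positivity
  have hbound : ∀ n : ℕ, 1 ≤ n →
      |triRes n - Real.log n / (Real.sqrt 3 * π)
        - (Real.eulerMascheroniConstant + Real.log (2 * Real.sqrt 3)) / (Real.sqrt 3 * π)|
        ≤ (2 / (Real.sqrt 3 * π) + M / π) / n :=
    fun n hn => main_bound n hn M (hMb n hn)
  refine ⟨⟨_, hK, hbound⟩, ?_⟩
  rw [← tendsto_sub_nhds_zero_iff]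
  apply squeeze_zero_norm' (a := fun n : ℕ => (2 / (Real.sqrt 3 * π) + M / π) / n)
  · filter_upwards [eventually_ge_atTop 1] with n hn
    rw [Real.norm_eq_abs]
    exact hbound n hn
  · exact tendsto_const_div_atTop_nhds_zero_nat _
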